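/- Let A = [[λ₁, e^{iφ}|λ₂−λ₁|cot θ], [0, λ₂]] with λ₁ ≠ λ₂, θ ∈ (0, π/2], φ ∈ [0, 2π). Then the numerical abscissa of A equals √(|λ₁−λ₂|²(1 + 2cot²θ) + Re[(λ₁−λ₂)²]) / (2√2) + Re(λ₁+λ₂)/2. -/

import Mathlib

open scoped Matrix
open Complex Real

/-- The numerical range of a square complex matrix. -/
def numRange {N : ℕ} (M : Matrix (Fin N) (Fin N) ℂ) : Set ℂ :=
  {z | ∃ x : EuclideanSpace ℂ (Fin N), ‖x‖ = 1 ∧ star (x : Fin N → ℂ) ⬝ᵥ M.mulVec x = z}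

/-- The numerical abscissa of a square complex matrix. -/
noncomputable def numAbs {N : ℕ} (M : Matrix (Fin N) (Fin N) ℂ) : ℝ :=
  sSup {r : ℝ | ∃ x : EuclideanSpace ℂ (Fin N), ‖x‖ = 1 ∧ (star (x : Fin N → ℂ) ⬝ᵥ M.mulVec x).re = r}

/-- The spectral (operator 2-)norm of a square complex matrix. -/
noncomputable def spec2 {N : ℕ} (M : Matrix (Fin N) (Fin N) ℂ) : ℝ :=
  ‖Matrix.toEuclideanCLM (𝕜 := ℂ) M‖

/-- The squared Frobenius norm of a square complex matrix. -/
noncomputable def frobSq {N : ℕ} (M : Matrix (Fin N) (Fin N) ℂ) : ℝ :=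
  ∑ i, ∑ j, ‖M i j‖ ^ 2

lemma aux_ineq (t m p q : ℝ) (h1 : p^2 + q^2 = 1) :
    t*(p^2 - q^2) + m*(p*q) ≤ Real.sqrt (t^2 + m^2/4) := by
  have hpq : (p^2-q^2)^2 + 4*(p*q)^2 = 1 := by nlinarith [h1]
  have key : (t^2+m^2/4) * ((p^2-q^2)^2 + 4*(p*q)^2) - (t*(p^2-q^2)+m*(p*q))^2
      = (2*t*(p*q) - m/2*(p^2-q^2))^2 := by ring
  rw [hpq, mul_one] at key
  have h2 : (t*(p^2-q^2)+m*(p*q))^2 ≤ t^2 + m^2/4 := by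
    nlinarith [sq_nonneg (2*t*(p*q) - m/2*(p^2-q^2))]
  calc t*(p^2-q^2)+m*(p*q) ≤ |t*(p^2-q^2)+m*(p*q)| := le_abs_self _
    _ = Real.sqrt ((t*(p^2-q^2)+m*(p*q))^2) := (Real.sqrt_sq_eq_abs _).symm
    _ ≤ Real.sqrt (t^2+m^2/4) := Real.sqrt_le_sqrt h2

lemma ub_aux (a d mm p q cr : ℝ) (h1 : p^2+q^2 = 1) (hcr : cr ≤ mm*(p*q)) :
    a*p^2 + d*q^2 + cr ≤ (a+d)/2 + Real.sqrt (((a-d)/2)^2 + mm^2/4) := by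
  have key := aux_ineq ((a-d)/2) mm p q h1
  have h2 : a*p^2 + d*q^2 = (a+d)/2 + (a-d)/2*(p^2-q^2) := by
    linear_combination ((a+d)/2) * h1
  linarith [key, hcr]

lemma main_aux (lam1 lam2 c : ℂ) (A : Matrix (Fin 2) (Fin 2) ℂ)
    (hA : A = !![lam1, c; 0, lam2]) :
    numAbs A = (lam1.re + lam2.re)/2 +
      Real.sqrt (((lam1.re - lam2.re)/2)^2 + ‖c‖^2/4) := by
  obtain ⟨m, hmdef⟩ : ∃ m : ℝ, m = ‖c‖ := ⟨_, rfl⟩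
  obtain ⟨t, htdef⟩ : ∃ t : ℝ, t = (lam1.re - lam2.re)/2 := ⟨_, rfl⟩
  rw [← hmdef, ← htdef]
  obtain ⟨r, hrdef⟩ : ∃ r : ℝ, r = Real.sqrt (t^2 + m^2/4) := ⟨_, rfl⟩
  rw [← hrdef]
  have hm0 : 0 ≤ m := hmdef ▸ norm_nonneg c
  have hr0 : 0 ≤ r := hrdef ▸ Real.sqrt_nonneg _
  have hr2 : r^2 = t^2 + m^2/4 := by rw [hrdef]; exact Real.sq_sqrt (by positivity)
  have hval : ∀ x : EuclideanSpace ℂ (Fin 2),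
      (star (x : Fin 2 → ℂ) ⬝ᵥ A.mulVec x).re =
        lam1.re * ‖x 0‖ ^ 2 + lam2.re * ‖x 1‖ ^ 2 +
          (c * ((starRingEnd ℂ) (x 0) * x 1)).re := by
    intro x
    simp [hA, Matrix.mulVec, dotProduct, Fin.sum_univ_two, Complex.sq_norm,
      Complex.normSq_apply, Complex.mul_re, Complex.add_re]
    ring
  have hnorm : ∀ x : EuclideanSpace ℂ (Fin 2), ‖x‖ = 1 →
      ‖x 0‖ ^ 2 + ‖x 1‖ ^ 2 = 1 := by
    intro x hx
    rw [EuclideanSpace.norm_eq, Real.sqrt_eq_one] at hx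
    simpa [Fin.sum_univ_two] using hx
  -- the achieving vector
  obtain ⟨s, hsdef⟩ : ∃ s : ℝ, s = if r = 0 then 0 else t/r := ⟨_, rfl⟩
  have ht_le : |t| ≤ r := by
    rw [← Real.sqrt_sq_eq_abs, hrdef]
    exact Real.sqrt_le_sqrt (by nlinarith [sq_nonneg m])
  have hs1 : |s| ≤ 1 := by
    rw [hsdef]
    split_ifs with h0
    · simp
    · have hrpos : 0 < r := lt_of_le_of_ne hr0 (Ne.symm h0)
      rw [abs_div, _root_.abs_of_pos hrpos, div_le_one hrpos]
      exact ht_le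
  obtain ⟨p, hpdef⟩ : ∃ p : ℝ, p = (1+s)/2 := ⟨_, rfl⟩
  obtain ⟨q, hqdef⟩ : ∃ q : ℝ, q = (1-s)/2 := ⟨_, rfl⟩
  have hsabs := abs_le.mp hs1
  have hp0 : 0 ≤ p := by rw [hpdef]; linarith [hsabs.1]
  have hq0 : 0 ≤ q := by rw [hqdef]; linarith [hsabs.2]
  have hpq1 : p + q = 1 := by rw [hpdef, hqdef]; ring
  obtain ⟨w, hwdef⟩ : ∃ w : ℂ, w = if c = 0 then 1 else (starRingEnd ℂ) c / (m : ℂ) := ⟨_, rfl⟩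
  have hw1 : ‖w‖ = 1 := by
    rw [hwdef]
    split_ifs with hc0
    · simp
    · have hmne : m ≠ 0 := by rw [hmdef]; simpa using hc0
      rw [norm_div, Complex.norm_conj, Complex.norm_real, Real.norm_eq_abs, _root_.abs_of_nonneg hm0, ← hmdef,
        div_self hmne]
  have hcw : c * w = (m : ℂ) := by
    rw [hwdef]
    split_ifs with hc0
    · simp [hc0, hmdef]
    · have hmne : (m : ℂ) ≠ 0 := by
        rw [hmdef]; simpa using hc0
      rw [mul_div_assoc', Complex.mul_conj]
      have h5 : (Complex.normSq c : ℂ) = (m : ℂ)^2 := by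
        rw [hmdef]
        push_cast [← Complex.sq_norm]
        norm_num
      rw [h5]
      field_simp
  set x : EuclideanSpace ℂ (Fin 2) :=
    (WithLp.equiv 2 (Fin 2 → ℂ)).symm ![((Real.sqrt p : ℝ) : ℂ), ((Real.sqrt q : ℝ) : ℂ) * w]
    with hxdef
  have hx0 : (x : Fin 2 → ℂ) 0 = ((Real.sqrt p : ℝ) : ℂ) := rfl
  have hx1 : (x : Fin 2 → ℂ) 1 = ((Real.sqrt q : ℝ) : ℂ) * w := rfl
  have habs0 : ‖(x : Fin 2 → ℂ) 0‖ ^ 2 = p := by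
    rw [hx0, Complex.norm_real, Real.norm_eq_abs, _root_.abs_of_nonneg (Real.sqrt_nonneg _), Real.sq_sqrt hp0]
  have habs1 : ‖(x : Fin 2 → ℂ) 1‖ ^ 2 = q := by
    rw [hx1, norm_mul, hw1, mul_one, Complex.norm_real, Real.norm_eq_abs,
      _root_.abs_of_nonneg (Real.sqrt_nonneg _), Real.sq_sqrt hq0]
  have hxnorm : ‖x‖ = 1 := by
    rw [EuclideanSpace.norm_eq, Real.sqrt_eq_one]
    have h6 : ∑ i : Fin 2, ‖x i‖ ^ 2 = ‖x 0‖ ^ 2 + ‖x 1‖ ^ 2 := by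
      simp [Fin.sum_univ_two]
    rw [h6, habs0, habs1, hpq1]
  have hcross : (c * ((starRingEnd ℂ) ((x : Fin 2 → ℂ) 0) * (x : Fin 2 → ℂ) 1)).re
      = Real.sqrt p * Real.sqrt q * m := by
    rw [hx0, hx1, Complex.conj_ofReal]
    have h7 : c * (((Real.sqrt p : ℝ) : ℂ) * (((Real.sqrt q : ℝ) : ℂ) * w))
        = ((Real.sqrt p * Real.sqrt q * m : ℝ) : ℂ) := by
      push_cast
      rw [show (c : ℂ) * ((Real.sqrt p : ℂ) * ((Real.sqrt q : ℂ) * w))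
          = (Real.sqrt p : ℂ) * (Real.sqrt q : ℂ) * (c * w) by ring, hcw]
    rw [h7]
    exact Complex.ofReal_re _
  have hxval : (star (x : Fin 2 → ℂ) ⬝ᵥ A.mulVec x).re = (lam1.re + lam2.re)/2 + r := by
    rw [hval x, habs0, habs1, hcross]
    by_cases h0 : r = 0
    · have hm00 : m = 0 := by nlinarith [hr2, sq_nonneg t, sq_nonneg m, h0]
      have hs0 : s = 0 := by rw [hsdef]; simp [h0]
      rw [hpdef, hqdef, hs0, hm00, h0]
      ring
    · have hrpos : 0 < r := lt_of_le_of_ne hr0 (Ne.symm h0)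
      have hs' : s = t/r := by rw [hsdef]; simp [h0]
      have hpq2 : p * q = (m/(4*r))^2 := by
        rw [hpdef, hqdef, hs']
        field_simp
        linear_combination 16 * hr2
      have hsq : Real.sqrt p * Real.sqrt q = m/(4*r) := by
        rw [← Real.sqrt_mul hp0, hpq2, Real.sqrt_sq (by positivity)]
      have hr2' := hr2
      rw [htdef] at hr2'
      rw [hsq, hpdef, hqdef, hs', htdef]
      field_simp
      linear_combination (-16)*hr2'
  -- conclude
  have hgreat : IsGreatest {y : ℝ | ∃ z : EuclideanSpace ℂ (Fin 2), ‖z‖ = 1 ∧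
      (star (z : Fin 2 → ℂ) ⬝ᵥ A.mulVec z).re = y} ((lam1.re + lam2.re)/2 + r) := by
    constructor
    · exact ⟨x, hxnorm, hxval⟩
    · rintro y ⟨z, hz, rfl⟩
      rw [hval z]
      have h1 := hnorm z hz
      have hcr : (c * ((starRingEnd ℂ) ((z : Fin 2 → ℂ) 0) * (z : Fin 2 → ℂ) 1)).re
          ≤ m * (‖z 0‖ * ‖z 1‖) := by
        calc (c * ((starRingEnd ℂ) ((z : Fin 2 → ℂ) 0) * (z : Fin 2 → ℂ) 1)).re
            ≤ ‖c * ((starRingEnd ℂ) ((z : Fin 2 → ℂ) 0) * (z : Fin 2 → ℂ) 1)‖ :=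
              Complex.re_le_norm _
          _ = m * (‖z 0‖ * ‖z 1‖) := by
              rw [norm_mul, norm_mul, Complex.norm_conj, hmdef]
      have := ub_aux lam1.re lam2.re m (‖z 0‖) (‖z 1‖)
        ((c * ((starRingEnd ℂ) ((z : Fin 2 → ℂ) 0) * (z : Fin 2 → ℂ) 1)).re) h1 hcr
      calc _ ≤ (lam1.re+lam2.re)/2 + Real.sqrt (((lam1.re-lam2.re)/2)^2 + m^2/4) := this
        _ = (lam1.re+lam2.re)/2 + r := by rw [hrdef, htdef]
  rw [numAbs]
  exact hgreat.csSup_eq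

/-- The numerical abscissa of A = [[λ₁, e^{iφ}|λ₂−λ₁|cot θ],[0, λ₂]]. -/
theorem stmt4 (lam1 lam2 : ℂ) (hne : lam1 ≠ lam2)
    (θ φ : ℝ) (hθ : θ ∈ Set.Ioc 0 (Real.pi / 2)) (hφ : φ ∈ Set.Ico 0 (2 * Real.pi))
    (A : Matrix (Fin 2) (Fin 2) ℂ)
    (hA : A = !![lam1, Complex.exp (Complex.I * (φ : ℂ)) *
        ((‖lam2 - lam1‖ * Real.cot θ : ℝ) : ℂ); 0, lam2]) :
    numAbs A =
      Real.sqrt (‖lam1 - lam2‖ ^ 2 * (1 + 2 * Real.cot θ ^ 2) +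
          (((lam1 - lam2) ^ 2).re)) / (2 * Real.sqrt 2) +
        (lam1 + lam2).re / 2 := by
  rw [main_aux lam1 lam2 _ A hA]
  obtain ⟨hθ1, hθ2⟩ := hθ
  have hπ := Real.pi_pos
  have hsin : 0 < Real.sin θ := Real.sin_pos_of_pos_of_lt_pi hθ1 (by linarith)
  have hcos : 0 ≤ Real.cos θ := Real.cos_nonneg_of_mem_Icc ⟨by linarith, hθ2⟩
  have hcot : 0 ≤ Real.cot θ := by rw [Real.cot_eq_cos_div_sin]; positivity
  have habs_sub : ‖lam2 - lam1‖ = ‖lam1 - lam2‖ := by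
    rw [show lam2 - lam1 = -(lam1 - lam2) by ring, norm_neg]
  have hre0 : (Complex.I * (φ : ℂ)).re = 0 := by simp
  have hm : ‖Complex.exp (Complex.I * (φ : ℂ)) *
      ((‖lam2 - lam1‖ * Real.cot θ : ℝ) : ℂ)‖
      = ‖lam1 - lam2‖ * Real.cot θ := by
    rw [norm_mul, Complex.norm_exp, hre0, Real.exp_zero, one_mul, Complex.norm_real, Real.norm_eq_abs,
      _root_.abs_of_nonneg (mul_nonneg (norm_nonneg _) hcot), habs_sub]
  rw [hm]
  have e1 : ‖lam1-lam2‖^2 = (lam1.re-lam2.re)^2+(lam1-lam2).im^2 := by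
    rw [Complex.sq_norm, Complex.normSq_apply, Complex.sub_re]; ring
  have e2 : ((lam1-lam2)^2).re = (lam1.re-lam2.re)^2-(lam1-lam2).im^2 := by
    rw [sq, Complex.mul_re, Complex.sub_re]; ring
  have e4 : (lam1+lam2).re = lam1.re + lam2.re := Complex.add_re _ _
  have e5 : ‖lam1-lam2‖^2*(1+2*Real.cot θ^2) +
      ((lam1.re-lam2.re)^2 - (lam1-lam2).im^2)
      = 8*(((lam1.re-lam2.re)/2)^2 + (‖lam1-lam2‖*Real.cot θ)^2/4) := by
    linear_combination (1 + 2*Real.cot θ^2 - 2*Real.cot θ^2) * e1 + 0*e2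
  have sqrt8 : ∀ T : ℝ, 0 ≤ T → Real.sqrt (8*T)/(2*Real.sqrt 2) = Real.sqrt T := by
    intro T hT
    rw [show (8:ℝ)*T = (2*Real.sqrt 2)^2*T by
        rw [mul_pow, Real.sq_sqrt (by norm_num : (0:ℝ) ≤ 2)]; norm_num,
      Real.sqrt_mul (sq_nonneg _), Real.sqrt_sq (by positivity),
      mul_div_cancel_left₀ _ (by positivity : (2*Real.sqrt 2) ≠ 0)]
  rw [e2, e4, e5, sqrt8 _ (by positivity)]
  ring
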